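/- For a non-encoding explanation e, the EVAL-X score exceeds the negative marginal entropy by exactly the mutual information between y and the explanation: EVAL-X(q,e) + H(y) = I(y ; x_{e(x)}), hence EVAL-X(q,e) ≥ −H(y). -/

import Mathlib

open scoped Classical

/-- Probability of an event under a probability mass function on a finite space. -/
noncomputable def Pr {Ω : Type*} [Fintype Ω] (p : Ω → ℝ) (E : Ω → Prop) : ℝ :=
  ∑ ω, if E ω then p ω else 0

/-- Conditional probability `P(A | B)`. -/
noncomputable def cPr {Ω : Type*} [Fintype Ω] (p : Ω → ℝ) (A B : Ω → Prop) : ℝ :=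
  Pr p (fun ω => A ω ∧ B ω) / Pr p B

section Helpers

variable {Ω : Type*} [Fintype Ω] (p : Ω → ℝ)

lemma Pr_nonneg (hp : ∀ ω, 0 ≤ p ω) (E : Ω → Prop) : 0 ≤ Pr p E := by
  apply Finset.sum_nonneg
  intro ω _
  by_cases h : E ω <;> simp [h, hp ω]

lemma Pr_pos (hp : ∀ ω, 0 < p ω) {E : Ω → Prop} {ω : Ω} (h : E ω) : 0 < Pr p E := by
  have h1 : p ω ≤ Pr p E := by
    have := Finset.single_le_sum (f := fun ω' => if E ω' then p ω' else 0)
      (fun ω' _ => by by_cases hE : E ω' <;> simp [hE, (hp ω').le]) (Finset.mem_univ ω)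
    simpa [h, Pr] using this
  exact lt_of_lt_of_le (hp ω) h1

lemma Pr_congr {E E' : Ω → Prop} (h : ∀ ω, E ω ↔ E' ω) : Pr p E = Pr p E' := by
  unfold Pr
  congr 1
  funext ω
  simp [h ω]

lemma Pr_group {κ : Type*} [DecidableEq κ] (f : Ω → κ) (F : κ → ℝ) :
    ∑ ω, p ω * F (f ω)
      = ∑ z ∈ Finset.univ.image f, Pr p (fun ω => f ω = z) * F z := by
  have key : ∀ z, Pr p (fun ω => f ω = z)
      = ∑ ω ∈ Finset.univ.filter (fun ω => f ω = z), p ω := by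
    intro z
    rw [Pr, Finset.sum_filter]
    exact Finset.sum_congr rfl fun ω _ => by simp
  simp_rw [key, Finset.sum_mul]
  rw [← Finset.sum_fiberwise_of_maps_to
      (fun ω _ => Finset.mem_image_of_mem f (Finset.mem_univ ω))
      (fun ω => p ω * F (f ω))]
  apply Finset.sum_congr rfl
  intro z _
  apply Finset.sum_congr rfl
  intro ω hω
  rw [Finset.mem_filter] at hω
  rw [hω.2]

lemma Pr_group_total {κ : Type*} [DecidableEq κ] (hsum : ∑ ω, p ω = 1) (f : Ω → κ) :
    ∑ z ∈ Finset.univ.image f, Pr p (fun ω => f ω = z) = 1 := by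
  have := Pr_group p f (fun _ => (1 : ℝ))
  simpa [hsum] using this.symm

lemma Pr_groupY {Y : Type*} [Fintype Y] (y : Ω → Y) (F : Y → ℝ) :
    ∑ ω, p ω * F (y ω) = ∑ y₀ : Y, Pr p (fun ω => y ω = y₀) * F y₀ := by
  rw [Pr_group p y F]
  apply Finset.sum_subset (Finset.subset_univ _)
  intro y₀ _ hy₀
  have : Pr p (fun ω => y ω = y₀) = 0 := by
    apply Finset.sum_eq_zero
    intro ω _
    have : y ω ≠ y₀ := fun h => hy₀ (h ▸ Finset.mem_image_of_mem y (Finset.mem_univ ω))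
    simp [this]
  simp [this]

end Helpers

/-- for a non-encoding explanation `e` (predicting from the explanation is
the same as predicting from its values), the EVAL-X score equals `−H(y) + I(y ; x_{e(x)})`,
hence is at least `−H(y)`.  Here `∑ y₀, P(y=y₀) log P(y=y₀)` is `−H(y)` and the mutual
information is written as `E[log (P(y | explanation) / P(y))]`. -/
theorem evalx_eq_negEntropy_add_MI_of_nonencoding
    {Ω A Y : Type*} [Fintype Ω] [Fintype Y] {d : ℕ}
    (p : Ω → ℝ) (hp : ∀ ω, 0 < p ω) (hsum : ∑ ω, p ω = 1)
    (x : Ω → Fin d → A) (y : Ω → Y)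
    (e : (Fin d → A) → (Fin d → Bool))
    (hnon : ∀ ω (y₀ : Y),
      cPr p (fun ω' => y ω' = y₀)
          (fun ω' => e (x ω') = e (x ω) ∧ ∀ i, e (x ω) i = true → x ω' i = x ω i)
        = cPr p (fun ω' => y ω' = y₀)
            (fun ω' => ∀ i, e (x ω) i = true → x ω' i = x ω i)) :
    ((∑ ω, p ω * Real.log (cPr p (fun ω' => y ω' = y ω)
          (fun ω' => ∀ i, e (x ω) i = true → x ω' i = x ω i)))
      = (∑ y₀ : Y, Pr p (fun ω => y ω = y₀) * Real.log (Pr p (fun ω => y ω = y₀)))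
        + (∑ ω, p ω * Real.log
            (cPr p (fun ω' => y ω' = y ω)
                (fun ω' => e (x ω') = e (x ω) ∧ ∀ i, e (x ω) i = true → x ω' i = x ω i)
              / Pr p (fun ω' => y ω' = y ω))))
    ∧ ((∑ y₀ : Y, Pr p (fun ω => y ω = y₀) * Real.log (Pr p (fun ω => y ω = y₀)))
        ≤ ∑ ω, p ω * Real.log (cPr p (fun ω' => y ω' = y ω)
            (fun ω' => ∀ i, e (x ω) i = true → x ω' i = x ω i))) := by
  classical
  set g : Ω → (Fin d → Bool) × (Fin d → Option A) :=
    fun ω => (e (x ω), fun i => if e (x ω) i = true then some (x ω i) else none) with hgdef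
  set h : Ω → Y × ((Fin d → Bool) × (Fin d → Option A)) := fun ω => (y ω, g ω) with hhdef
  -- the full conditioning event coincides with the fibers of g
  have hgiff : ∀ ω ω',
      ((e (x ω') = e (x ω) ∧ ∀ i, e (x ω) i = true → x ω' i = x ω i)) ↔ g ω' = g ω := by
    intro ω ω'
    constructor
    · rintro ⟨h1, h2⟩
      simp only [hgdef, Prod.mk.injEq]
      refine ⟨h1, funext fun i => ?_⟩
      by_cases hb : e (x ω) i = true
      · have hb' : e (x ω') i = true := by rw [h1]; exact hb
        simp [hb, hb', h2 i hb]
      · have hb' : ¬ e (x ω') i = true := by rw [h1]; exact hb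
        simp [hb, hb']
    · intro hEq
      have h1 : e (x ω') = e (x ω) := congrArg Prod.fst hEq
      refine ⟨h1, fun i hi => ?_⟩
      have h2 := congrFun (congrArg Prod.snd hEq) i
      have hb' : e (x ω') i = true := by rw [h1]; exact hi
      simp only [hgdef, hb', hi, if_true] at h2
      exact Option.some.injEq _ _ ▸ (by simpa using h2)
  have hhiff : ∀ ω ω',
      (y ω' = y ω ∧ (e (x ω') = e (x ω) ∧ ∀ i, e (x ω) i = true → x ω' i = x ω i))
        ↔ h ω' = h ω := by
    intro ω ω'
    rw [hhdef]
    simp only [Prod.mk.injEq]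
    exact and_congr Iff.rfl (hgiff ω ω')
  -- rewriting the probabilities
  have hPrg : ∀ ω, Pr p (fun ω' => e (x ω') = e (x ω) ∧ ∀ i, e (x ω) i = true → x ω' i = x ω i)
      = Pr p (fun ω' => g ω' = g ω) := fun ω => Pr_congr p (hgiff ω)
  have hPrh : ∀ ω, Pr p (fun ω' => y ω' = y ω ∧
        (e (x ω') = e (x ω) ∧ ∀ i, e (x ω) i = true → x ω' i = x ω i))
      = Pr p (fun ω' => h ω' = h ω) := fun ω => Pr_congr p (hhiff ω)
  -- positivity
  have hPy : ∀ ω, 0 < Pr p (fun ω' => y ω' = y ω) := fun ω => Pr_pos p hp (rfl : y ω = y ω)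
  have hPg : ∀ ω, 0 < Pr p (fun ω' => g ω' = g ω) := fun ω => Pr_pos p hp (rfl : g ω = g ω)
  have hPh : ∀ ω, 0 < Pr p (fun ω' => h ω' = h ω) := fun ω => Pr_pos p hp (rfl : h ω = h ω)
  have hcfull : ∀ ω, cPr p (fun ω' => y ω' = y ω)
      (fun ω' => e (x ω') = e (x ω) ∧ ∀ i, e (x ω) i = true → x ω' i = x ω i)
      = Pr p (fun ω' => h ω' = h ω) / Pr p (fun ω' => g ω' = g ω) := by
    intro ω
    rw [cPr, hPrg ω, hPrh ω]
  have hcpos : ∀ ω, 0 < cPr p (fun ω' => y ω' = y ω)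
      (fun ω' => e (x ω') = e (x ω) ∧ ∀ i, e (x ω) i = true → x ω' i = x ω i) := by
    intro ω
    rw [hcfull ω]
    exact div_pos (hPh ω) (hPg ω)
  have hvals : ∀ ω, cPr p (fun ω' => y ω' = y ω)
      (fun ω' => ∀ i, e (x ω) i = true → x ω' i = x ω i)
      = cPr p (fun ω' => y ω' = y ω)
        (fun ω' => e (x ω') = e (x ω) ∧ ∀ i, e (x ω) i = true → x ω' i = x ω i) :=
    fun ω => (hnon ω (y ω)).symm
  -- abbreviations
  set negH := ∑ y₀ : Y, Pr p (fun ω => y ω = y₀) * Real.log (Pr p (fun ω => y ω = y₀)) with hnegH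
  have eq3 : ∑ ω, p ω * Real.log (Pr p (fun ω' => y ω' = y ω)) = negH := by
    rw [hnegH, ← Pr_groupY p y (fun y₀ => Real.log (Pr p (fun ω => y ω = y₀)))]
  have eq1 : (∑ ω, p ω * Real.log (cPr p (fun ω' => y ω' = y ω)
          (fun ω' => ∀ i, e (x ω) i = true → x ω' i = x ω i)))
      = ∑ ω, p ω * Real.log (cPr p (fun ω' => y ω' = y ω)
          (fun ω' => e (x ω') = e (x ω) ∧ ∀ i, e (x ω) i = true → x ω' i = x ω i)) :=
    Finset.sum_congr rfl fun ω _ => by rw [hvals ω]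
  have eq2 : (∑ ω, p ω * Real.log
            (cPr p (fun ω' => y ω' = y ω)
                (fun ω' => e (x ω') = e (x ω) ∧ ∀ i, e (x ω) i = true → x ω' i = x ω i)
              / Pr p (fun ω' => y ω' = y ω)))
      = (∑ ω, p ω * Real.log (cPr p (fun ω' => y ω' = y ω)
          (fun ω' => e (x ω') = e (x ω) ∧ ∀ i, e (x ω) i = true → x ω' i = x ω i)))
        - ∑ ω, p ω * Real.log (Pr p (fun ω' => y ω' = y ω)) := by
    rw [← Finset.sum_sub_distrib]
    refine Finset.sum_congr rfl fun ω _ => ?_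
    rw [Real.log_div (ne_of_gt (hcpos ω)) (ne_of_gt (hPy ω)), mul_sub]
  -- the first conjunct
  have conj1 : (∑ ω, p ω * Real.log (cPr p (fun ω' => y ω' = y ω)
          (fun ω' => ∀ i, e (x ω) i = true → x ω' i = x ω i)))
      = negH + (∑ ω, p ω * Real.log
            (cPr p (fun ω' => y ω' = y ω)
                (fun ω' => e (x ω') = e (x ω) ∧ ∀ i, e (x ω) i = true → x ω' i = x ω i)
              / Pr p (fun ω' => y ω' = y ω))) := by
    rw [eq1, eq2, eq3]
    ring
  -- nonnegativity of the MI term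
  have hT : (∑ ω, p ω * (Pr p (fun ω' => y ω' = y ω)
        / cPr p (fun ω' => y ω' = y ω)
          (fun ω' => e (x ω') = e (x ω) ∧ ∀ i, e (x ω) i = true → x ω' i = x ω i))) ≤ 1 := by
    have hrw : ∀ ω, Pr p (fun ω' => y ω' = y ω)
        / cPr p (fun ω' => y ω' = y ω)
          (fun ω' => e (x ω') = e (x ω) ∧ ∀ i, e (x ω) i = true → x ω' i = x ω i)
        = (fun z : Y × ((Fin d → Bool) × (Fin d → Option A)) =>
            Pr p (fun ω' => y ω' = z.1) * Pr p (fun ω' => g ω' = z.2)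
              / Pr p (fun ω' => h ω' = z)) (h ω) := by
      intro ω
      simp only [hhdef]
      rw [hcfull ω, div_div_eq_mul_div]
    calc (∑ ω, p ω * (Pr p (fun ω' => y ω' = y ω)
        / cPr p (fun ω' => y ω' = y ω)
          (fun ω' => e (x ω') = e (x ω) ∧ ∀ i, e (x ω) i = true → x ω' i = x ω i)))
        = ∑ ω, p ω * (fun z : Y × ((Fin d → Bool) × (Fin d → Option A)) =>
            Pr p (fun ω' => y ω' = z.1) * Pr p (fun ω' => g ω' = z.2)
              / Pr p (fun ω' => h ω' = z)) (h ω) :=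
          Finset.sum_congr rfl fun ω _ => by rw [hrw ω]
      _ = ∑ z ∈ Finset.univ.image h, Pr p (fun ω => h ω = z) *
            (Pr p (fun ω' => y ω' = z.1) * Pr p (fun ω' => g ω' = z.2)
              / Pr p (fun ω' => h ω' = z)) := by
          exact Pr_group p h (fun z => Pr p (fun ω' => y ω' = z.1) * Pr p (fun ω' => g ω' = z.2)
              / Pr p (fun ω' => h ω' = z))
      _ = ∑ z ∈ Finset.univ.image h,
            Pr p (fun ω' => y ω' = z.1) * Pr p (fun ω' => g ω' = z.2) := by
          refine Finset.sum_congr rfl fun z hz => ?_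
          obtain ⟨ω₀, _, hω₀⟩ := Finset.mem_image.mp hz
          have hpos : 0 < Pr p (fun ω => h ω = z) := Pr_pos p hp hω₀
          rw [mul_comm, div_mul_cancel₀ _ (ne_of_gt hpos)]
      _ ≤ ∑ z ∈ Finset.univ ×ˢ Finset.univ.image g,
            Pr p (fun ω' => y ω' = z.1) * Pr p (fun ω' => g ω' = z.2) := by
          refine Finset.sum_le_sum_of_subset_of_nonneg ?_ fun z _ _ =>
            mul_nonneg (Pr_nonneg p (fun ω => (hp ω).le) _) (Pr_nonneg p (fun ω => (hp ω).le) _)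
          intro z hz
          obtain ⟨ω₀, _, hω₀⟩ := Finset.mem_image.mp hz
          rw [Finset.mem_product]
          exact ⟨Finset.mem_univ _, by
            rw [← hω₀]
            exact Finset.mem_image_of_mem g (Finset.mem_univ ω₀)⟩
      _ = (∑ y₀ : Y, Pr p (fun ω' => y ω' = y₀)) *
            (∑ c ∈ Finset.univ.image g, Pr p (fun ω' => g ω' = c)) := by
          rw [Finset.sum_product, Finset.sum_mul_sum]
      _ = 1 := by
          rw [Pr_group_total p hsum g, mul_one]
          have := Pr_groupY p y (fun _ => (1 : ℝ))
          simpa [hsum] using this.symm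
  have hMI : 0 ≤ (∑ ω, p ω * Real.log
            (cPr p (fun ω' => y ω' = y ω)
                (fun ω' => e (x ω') = e (x ω) ∧ ∀ i, e (x ω) i = true → x ω' i = x ω i)
              / Pr p (fun ω' => y ω' = y ω))) := by
    have step : ∀ ω, p ω * (1 - Pr p (fun ω' => y ω' = y ω)
        / cPr p (fun ω' => y ω' = y ω)
          (fun ω' => e (x ω') = e (x ω) ∧ ∀ i, e (x ω) i = true → x ω' i = x ω i))
        ≤ p ω * Real.log
            (cPr p (fun ω' => y ω' = y ω)
                (fun ω' => e (x ω') = e (x ω) ∧ ∀ i, e (x ω) i = true → x ω' i = x ω i)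
              / Pr p (fun ω' => y ω' = y ω)) := by
      intro ω
      refine mul_le_mul_of_nonneg_left ?_ (hp ω).le
      have hdivpos : 0 < Pr p (fun ω' => y ω' = y ω)
          / cPr p (fun ω' => y ω' = y ω)
            (fun ω' => e (x ω') = e (x ω) ∧ ∀ i, e (x ω) i = true → x ω' i = x ω i) :=
        div_pos (hPy ω) (hcpos ω)
      have hlog := Real.log_le_sub_one_of_pos hdivpos
      have hinv : Real.log
            (cPr p (fun ω' => y ω' = y ω)
                (fun ω' => e (x ω') = e (x ω) ∧ ∀ i, e (x ω) i = true → x ω' i = x ω i)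
              / Pr p (fun ω' => y ω' = y ω))
          = - Real.log (Pr p (fun ω' => y ω' = y ω)
            / cPr p (fun ω' => y ω' = y ω)
              (fun ω' => e (x ω') = e (x ω) ∧ ∀ i, e (x ω) i = true → x ω' i = x ω i)) := by
        rw [← Real.log_inv, inv_div]
      rw [hinv]
      linarith
    calc (0:ℝ) = 1 - 1 := by ring
      _ ≤ (∑ ω, p ω) - (∑ ω, p ω * (Pr p (fun ω' => y ω' = y ω)
        / cPr p (fun ω' => y ω' = y ω)
          (fun ω' => e (x ω') = e (x ω) ∧ ∀ i, e (x ω) i = true → x ω' i = x ω i))) := by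
          rw [hsum]; linarith [hT]
      _ = ∑ ω, p ω * (1 - Pr p (fun ω' => y ω' = y ω)
        / cPr p (fun ω' => y ω' = y ω)
          (fun ω' => e (x ω') = e (x ω) ∧ ∀ i, e (x ω) i = true → x ω' i = x ω i)) := by
          rw [← Finset.sum_sub_distrib]
          exact Finset.sum_congr rfl fun ω _ => by ring
      _ ≤ _ := Finset.sum_le_sum fun ω _ => step ω
  exact ⟨conj1, by rw [conj1]; linarith⟩
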